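/- The Horn matrix is not positive semidefinite, but u^T H u = 0 for u = (1,0,1,0,0) and u = (1,0,0,1,0); moreover any 5×5 positive semidefinite matrix P with P ≤ H entrywise and Pu = 0 for all nonnegative zeros u of x^T H x must equal tJ for some t ≥ 0, which contradicts P ≤ H. -/

import Mathlib

open Matrix

/-- The Horn matrix. -/
def hornMatrix : Matrix (Fin 5) (Fin 5) ℝ :=
  !![1, 1, -1, -1, 1;
     1, 1, 1, -1, -1;
     -1, 1, 1, 1, -1;
     -1, -1, 1, 1, 1;
     1, -1, -1, 1, 1]

/-- The vector `e_i + e_j` in `ℝ⁵`. -/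
def eij (i j : Fin 5) : Fin 5 → ℝ :=
  fun m => (if m = i then 1 else 0) + (if m = j then 1 else 0)

/-- (a) The Horn matrix is not positive semidefinite, yet the ten nonnegative vectors
`e_i + e_{i+2}` and `e_i + e_{i+3}` (indices mod 5) are zeros of its quadratic form;
(b) any positive semidefinite `P` annihilating all these zeros is a nonnegative multiple
`tJ` of the all-ones matrix; (c) no such `tJ` with `t ≥ 0` is entrywise at most the
Horn matrix. -/
theorem horn_zeros_and_no_psd_below :
    (¬ hornMatrix.PosSemidef) ∧
    (∀ i : Fin 5,
      eij i (i + 2) ⬝ᵥ hornMatrix.mulVec (eij i (i + 2)) = 0 ∧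
      eij i (i + 3) ⬝ᵥ hornMatrix.mulVec (eij i (i + 3)) = 0) ∧
    (∀ P : Matrix (Fin 5) (Fin 5) ℝ, P.PosSemidef →
      (∀ i : Fin 5, P.mulVec (eij i (i + 2)) = 0 ∧ P.mulVec (eij i (i + 3)) = 0) →
      ∃ t : ℝ, 0 ≤ t ∧ P = Matrix.of fun _ _ => t) ∧
    (¬ ∃ t : ℝ, 0 ≤ t ∧ ∀ i j, t ≤ hornMatrix i j) := by
  refine ⟨?_, ?_, ?_, ?_⟩
  · intro h
    have := h.dotProduct_mulVec_nonneg ![1, -1, 1, -1, 0]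
    simp [hornMatrix, mulVec, dotProduct, Fin.sum_univ_five, Matrix.vecHead,
      Matrix.vecTail] at this
    linarith
  · intro i
    fin_cases i <;>
      constructor <;>
        simp (config := { decide := true }) [eij, hornMatrix, mulVec, dotProduct,
          Fin.sum_univ_five, Matrix.vecHead, Matrix.vecTail]
  · intro P _ hP
    refine ⟨0, le_refl 0, ?_⟩
    ext k j
    have h0 := congrFun (hP 0).1 k
    have h1 := congrFun (hP 1).1 k
    have h2 := congrFun (hP 2).1 k
    have h3 := congrFun (hP 3).1 k
    have h4 := congrFun (hP 4).1 k
    simp [eij, mulVec, dotProduct, Fin.sum_univ_five,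
      show (0:Fin 5)+2 = 2 from rfl, show (1:Fin 5)+2 = 3 from rfl,
      show (2:Fin 5)+2 = 4 from rfl, show (3:Fin 5)+2 = 0 from rfl,
      show (4:Fin 5)+2 = 1 from rfl] at h0 h1 h2 h3 h4
    simp only [Matrix.of_apply]
    fin_cases j
    · show P k 0 = 0; linarith
    · show P k 1 = 0; linarith
    · show P k 2 = 0; linarith
    · show P k 3 = 0; linarith
    · show P k 4 = 0; linarith
  · rintro ⟨t, ht, h⟩
    have := h 0 2
    simp [hornMatrix] at this
    linarith
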